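/- Let N ≥ 1 be an integer, P ≥ 1 squarefree, P_{6N} = P/gcd(P,6N). For a divisor d of P_{6N}, let W_P^d(N) = {n : 1 ≤ n ≤ P, gcd((N−n)(N+n), P) = 1, gcd(P_{6N}, n) = d}. Then |W_P^d(N)| = ∏_{p ∣ gcd(N,P)} (p−1) · ∏_{p ∣ P, p ∤ 6dN} (p−3), where the products run over prime divisors. -/

import Mathlib

open Finset

lemma icc_modeq_eq {m n n' : ℕ} (hn : n ∈ Finset.Icc 1 m) (hn' : n' ∈ Finset.Icc 1 m)
    (h : n ≡ n' [MOD m]) : n = n' := by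
  simp only [Finset.mem_Icc] at hn hn'
  have key : ∀ k, 1 ≤ k → k ≤ m → k % m = if k = m then 0 else k := by
    intro k h1 h2
    rcases eq_or_lt_of_le h2 with rfl | h2
    · simp [Nat.mod_self]
    · simp [Nat.mod_eq_of_lt h2, Nat.ne_of_lt h2]
  have e1 := key n hn.1 hn.2
  have e2 := key n' hn'.1 hn'.2
  unfold Nat.ModEq at h
  rw [e1, e2] at h
  split_ifs at h <;> omega

def toIcc (m n : ℕ) : ℕ := if n % m = 0 then m else n % m

lemma toIcc_mem {m : ℕ} (hm : 0 < m) (n : ℕ) : toIcc m n ∈ Finset.Icc 1 m := by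
  unfold toIcc
  split_ifs with h
  · simp only [Finset.mem_Icc]
    exact ⟨hm, le_refl m⟩
  · simp only [Finset.mem_Icc]
    exact ⟨Nat.one_le_iff_ne_zero.2 h, le_of_lt (Nat.mod_lt _ hm)⟩

lemma toIcc_modeq (m n : ℕ) : toIcc m n ≡ n [MOD m] := by
  unfold toIcc Nat.ModEq
  split_ifs with h
  · rw [Nat.mod_self, h]
  · rw [Nat.mod_mod_of_dvd _ dvd_rfl]

lemma gcd_int_congr {x y : ℤ} {m : ℕ} (h : x ≡ y [ZMOD (m : ℤ)]) :
    Int.gcd x m = Int.gcd y m := by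
  have key : ∀ u v : ℤ, u ≡ v [ZMOD (m : ℤ)] → Int.gcd u m ∣ Int.gcd v m := by
    intro u v huv
    have h1 : (Int.gcd u m : ℤ) ∣ v := by
      have h2 : (m : ℤ) ∣ v - u := Int.ModEq.dvd huv
      have h3 : (Int.gcd u m : ℤ) ∣ v - u := dvd_trans (Int.gcd_dvd_right u (m:ℤ)) h2
      have h4 : (Int.gcd u m : ℤ) ∣ u := Int.gcd_dvd_left u (m:ℤ)
      have := dvd_add h3 h4
      simpa using this
    have := Int.dvd_gcd h1 (Int.gcd_dvd_right (a := u) (b := (m:ℤ)))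
    exact_mod_cast this
  exact Nat.dvd_antisymm (key _ _ h) (key _ _ h.symm)

lemma gcd_nat_congr {m n n' : ℕ} (h : n ≡ n' [MOD m]) : Nat.gcd m n = Nat.gcd m n' := by
  rw [Nat.gcd_rec m n, Nat.gcd_rec m n', h]

lemma cond1_congr {N m n n' : ℕ} (h : n ≡ n' [MOD m]) :
    Int.gcd (((N : ℤ) - n) * ((N : ℤ) + n)) m = Int.gcd (((N : ℤ) - n') * ((N : ℤ) + n')) m := by
  apply gcd_int_congr
  have h' : (n : ℤ) ≡ (n' : ℤ) [ZMOD (m : ℤ)] := Int.natCast_modEq_iff.2 h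
  exact ((Int.ModEq.refl (N:ℤ)).sub h').mul ((Int.ModEq.refl (N:ℤ)).add h')

lemma cond1_split {x : ℤ} {a b : ℕ} :
    Int.gcd x ((a * b : ℕ) : ℤ) = 1 ↔ Int.gcd x (a : ℤ) = 1 ∧ Int.gcd x (b : ℤ) = 1 := by
  rw [← Int.isCoprime_iff_gcd_eq_one, ← Int.isCoprime_iff_gcd_eq_one, ← Int.isCoprime_iff_gcd_eq_one]
  push_cast
  exact IsCoprime.mul_right_iff

lemma card_icc_filter_cast (p : ℕ) [NeZero p] (f : ZMod p → Prop) [DecidablePred f] :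
    ((Finset.Icc 1 p).filter (fun n : ℕ => f (n : ZMod p))).card
      = (Finset.univ.filter f).card := by
  have hp : 0 < p := Nat.pos_of_ne_zero (NeZero.ne p)
  refine Finset.card_bij (fun n _ => (n : ZMod p)) ?_ ?_ ?_
  · intro a ha
    simp only [Finset.mem_filter] at ha ⊢
    exact ⟨Finset.mem_univ _, ha.2⟩
  · intro a ha b hb hab
    simp only [Finset.mem_filter] at ha hb
    exact icc_modeq_eq ha.1 hb.1 ((ZMod.natCast_eq_natCast_iff _ _ _).1 hab)
  · intro z hz
    simp only [Finset.mem_filter] at hz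
    have hcast : ((toIcc p z.val : ℕ) : ZMod p) = z := by
      have h1 := (ZMod.natCast_eq_natCast_iff _ _ _).2 (toIcc_modeq p z.val)
      rw [h1, ZMod.natCast_val, ZMod.cast_id]
    refine ⟨toIcc p z.val, Finset.mem_filter.2 ⟨toIcc_mem hp _, ?_⟩, hcast⟩
    rw [hcast]; exact hz.2

lemma card_filter_not_mem {p : ℕ} [NeZero p] (s : Finset (ZMod p)) :
    (Finset.univ.filter (fun x : ZMod p => x ∉ s)).card = p - s.card := by
  have h : Finset.univ.filter (fun x : ZMod p => x ∉ s) = sᶜ := by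
    ext x; simp [Finset.mem_compl]
  rw [h, Finset.card_compl, ZMod.card]


lemma dvd_sub_iff {N n p : ℕ} [NeZero p] :
    ((p:ℤ) ∣ (N : ℤ) - n) ↔ (n : ZMod p) = (N : ZMod p) := by
  rw [← ZMod.intCast_zmod_eq_zero_iff_dvd]
  push_cast
  rw [sub_eq_zero, eq_comm]

lemma dvd_add_iff {N n p : ℕ} [NeZero p] :
    ((p:ℤ) ∣ (N : ℤ) + n) ↔ (n : ZMod p) = -(N : ZMod p) := by
  rw [← ZMod.intCast_zmod_eq_zero_iff_dvd]
  push_cast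
  constructor
  · intro h; exact eq_neg_of_add_eq_zero_right h
  · intro h; rw [h]; ring

lemma cond1_iff {N n p : ℕ} (hp : p.Prime) :
    Int.gcd (((N : ℤ) - n) * ((N : ℤ) + n)) p = 1 ↔
      ((n : ZMod p) ≠ (N : ZMod p) ∧ (n : ZMod p) ≠ -(N : ZMod p)) := by
  haveI : NeZero p := ⟨hp.pos.ne'⟩
  have hpz : Prime (p : ℤ) := Nat.prime_iff_prime_int.mp hp
  rw [← Int.isCoprime_iff_gcd_eq_one, isCoprime_comm, hpz.coprime_iff_not_dvd,
    hpz.dvd_mul, not_or, dvd_sub_iff, dvd_add_iff]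

lemma prime_case (N p : ℕ) (hN : 1 ≤ N) (hp : p.Prime) (d : ℕ)
    (hd : d ∣ p / Nat.gcd p (6 * N)) :
    ((Finset.Icc 1 p).filter
        (fun n : ℕ => Int.gcd (((N : ℤ) - (n : ℤ)) * ((N : ℤ) + (n : ℤ))) (p : ℤ) = 1
          ∧ Nat.gcd (p / Nat.gcd p (6 * N)) n = d)).card
      = (∏ q ∈ (Nat.gcd N p).primeFactors, (q - 1)) *
        ∏ q ∈ p.primeFactors.filter (fun q => ¬ q ∣ 6 * d * N), (q - 3) := by
  classical
  haveI : NeZero p := ⟨hp.pos.ne'⟩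
  by_cases h6N : p ∣ 6 * N
  · have hg : Nat.gcd p (6 * N) = p := Nat.gcd_eq_left h6N
    have hP' : p / Nat.gcd p (6 * N) = 1 := by rw [hg, Nat.div_self hp.pos]
    rw [hP'] at hd ⊢
    have hd1 : d = 1 := Nat.dvd_one.mp hd
    subst hd1
    by_cases hpN : p ∣ N
    · -- scenario A : p ∣ N
      have hN0 : (N : ZMod p) = 0 := (ZMod.natCast_eq_zero_iff N p).2 hpN
      have hcard : ((Finset.Icc 1 p).filter
          (fun n : ℕ => Int.gcd (((N : ℤ) - n) * ((N : ℤ) + n)) p = 1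
            ∧ Nat.gcd 1 n = 1)).card
          = ((Finset.Icc 1 p).filter (fun n : ℕ =>
              (fun x : ZMod p => x ∉ ({0} : Finset (ZMod p))) ((n : ZMod p)))).card := by
        congr 1
        apply Finset.filter_congr
        intro n _
        rw [cond1_iff hp, hN0, neg_zero]
        simp
      rw [hcard, card_icc_filter_cast p (fun x : ZMod p => x ∉ ({0} : Finset (ZMod p))),
        card_filter_not_mem]
      have h1 : Nat.gcd N p = p := Nat.gcd_eq_right hpN
      have h2 : p ∣ 6 * 1 * N := Dvd.dvd.mul_left hpN (6 * 1)
      rw [h1, hp.primeFactors]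
      rw [Finset.filter_singleton]
      simp [h2]
    · -- scenario B : p ∣ 6, ¬ p ∣ N
      have hp6 : p ∣ 6 := by
        rcases (Nat.Prime.dvd_mul hp).1 h6N with h | h
        · exact h
        · exact absurd h hpN
      have hN0 : (N : ZMod p) ≠ 0 := fun h =>
        hpN ((ZMod.natCast_eq_zero_iff N p).1 h)
      have hcard : ((Finset.Icc 1 p).filter
          (fun n : ℕ => Int.gcd (((N : ℤ) - n) * ((N : ℤ) + n)) p = 1
            ∧ Nat.gcd 1 n = 1)).card
          = ((Finset.Icc 1 p).filter (fun n : ℕ =>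
              (fun x : ZMod p => x ∉ ({(N : ZMod p), -(N : ZMod p)} : Finset (ZMod p)))
                ((n : ZMod p)))).card := by
        congr 1
        apply Finset.filter_congr
        intro n _
        rw [cond1_iff hp]
        simp [not_or]
      rw [hcard, card_icc_filter_cast p
          (fun x : ZMod p => x ∉ ({(N : ZMod p), -(N : ZMod p)} : Finset (ZMod p))),
        card_filter_not_mem]
      have hgcd : Nat.gcd N p = 1 := Nat.Coprime.gcd_eq_one ((hp.coprime_iff_not_dvd.2 hpN).symm)
      have h2 : p ∣ 6 * 1 * N := Dvd.dvd.mul_right (Dvd.dvd.mul_right hp6 1) N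
      rw [hgcd, Nat.primeFactors_one, hp.primeFactors, Finset.filter_singleton]
      simp only [h2, not_true_eq_false, if_false, Finset.prod_empty, one_mul]
      -- goal : p - card {N, -N} = 1
      have hp23 : p = 2 ∨ p = 3 := by
        rcases (Nat.Prime.dvd_mul hp).1 (show p ∣ 2 * 3 from hp6) with h | h
        · exact Or.inl ((Nat.prime_dvd_prime_iff_eq hp Nat.prime_two).1 h)
        · exact Or.inr ((Nat.prime_dvd_prime_iff_eq hp Nat.prime_three).1 h)
      rcases hp23 with rfl | rfl
      · have hneg : -(N : ZMod 2) = (N : ZMod 2) := by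
          have : ((N : ZMod 2) + (N : ZMod 2)) = 0 := by
            have : ((2 * N : ℕ) : ZMod 2) = 0 :=
              (ZMod.natCast_eq_zero_iff _ _).2 ⟨N, rfl⟩
            push_cast at this
            push_cast at this
            linear_combination this
          linear_combination -this
        rw [hneg]
        simp
      · have hneg : -(N : ZMod 3) ≠ (N : ZMod 3) := by
          intro h
          have h2 : ((2 * N : ℕ) : ZMod 3) = 0 := by
            push_cast
            linear_combination - h
          have := (ZMod.natCast_eq_zero_iff _ _).1 h2
          rcases (Nat.Prime.dvd_mul Nat.prime_three).1 this with h | h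
          · norm_num at h
          · exact hpN h
        rw [Finset.card_insert_of_notMem (by simpa using fun h => hneg h.symm)]
        simp
  · -- p coprime to 6N
    have hg : Nat.gcd p (6 * N) = 1 := hp.coprime_iff_not_dvd.2 h6N
    have hP' : p / Nat.gcd p (6 * N) = p := by rw [hg, Nat.div_one]
    rw [hP'] at hd ⊢
    have hpN : ¬ p ∣ N := fun h => h6N (Dvd.dvd.mul_left h 6)
    have hp2N : ¬ p ∣ 2 * N := fun h => h6N (by
      have : 2 * N ∣ 6 * N := mul_dvd_mul_right (by norm_num) N
      exact dvd_trans h this)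
    have hN0 : (N : ZMod p) ≠ 0 := fun h =>
      hpN ((ZMod.natCast_eq_zero_iff N p).1 h)
    have hNneg : (N : ZMod p) ≠ -(N : ZMod p) := by
      intro h
      have h2 : ((2 * N : ℕ) : ZMod p) = 0 := by
        push_cast
        linear_combination h
      exact hp2N ((ZMod.natCast_eq_zero_iff _ _).1 h2)
    have hgcdNp : Nat.gcd N p = 1 := Nat.Coprime.gcd_eq_one ((hp.coprime_iff_not_dvd.2 hpN).symm)
    rcases (Nat.Prime.eq_one_or_self_of_dvd hp d hd) with rfl | rfl
    · -- d = 1 : count = p - 3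
      have hcard : ((Finset.Icc 1 p).filter
          (fun n : ℕ => Int.gcd (((N : ℤ) - n) * ((N : ℤ) + n)) p = 1
            ∧ Nat.gcd p n = 1)).card
          = ((Finset.Icc 1 p).filter (fun n : ℕ =>
              (fun x : ZMod p => x ∉ ({(N : ZMod p), -(N : ZMod p), 0} : Finset (ZMod p)))
                ((n : ZMod p)))).card := by
        congr 1
        apply Finset.filter_congr
        intro n _
        rw [cond1_iff hp]
        have : Nat.gcd p n = 1 ↔ (n : ZMod p) ≠ 0 := by
          rw [← Nat.coprime_iff_gcd_eq_one, hp.coprime_iff_not_dvd]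
          simp [ZMod.natCast_eq_zero_iff]
        rw [this]
        simp only [Finset.mem_insert, Finset.mem_singleton, not_or]
        tauto
      rw [hcard, card_icc_filter_cast p
          (fun x : ZMod p => x ∉ ({(N : ZMod p), -(N : ZMod p), 0} : Finset (ZMod p))),
        card_filter_not_mem]
      have hcard3 : ({(N : ZMod p), -(N : ZMod p), 0} : Finset (ZMod p)).card = 3 := by
        rw [Finset.card_insert_of_notMem
            (by simp only [Finset.mem_insert, Finset.mem_singleton, not_or]
                exact ⟨hNneg, hN0⟩),
          Finset.card_insert_of_notMem
            (by simp only [Finset.mem_singleton]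
                exact fun h => hN0 (neg_eq_zero.1 h))]
        simp
      rw [hcard3, hgcdNp, Nat.primeFactors_one, hp.primeFactors, Finset.filter_singleton]
      have h6dn : ¬ p ∣ 6 * 1 * N := by simpa using h6N
      simp [h6dn]
    · -- d = d : count = 1
      have hcard : ((Finset.Icc 1 d).filter
          (fun n : ℕ => Int.gcd (((N : ℤ) - n) * ((N : ℤ) + n)) d = 1
            ∧ Nat.gcd d n = d)).card
          = ((Finset.Icc 1 d).filter (fun n : ℕ =>
              (fun x : ZMod d => ((x ≠ (N : ZMod d) ∧ x ≠ -(N : ZMod d)) ∧ x = 0))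
                ((n : ZMod d)))).card := by
        congr 1
        apply Finset.filter_congr
        intro n _
        rw [cond1_iff hp]
        have : Nat.gcd d n = d ↔ (n : ZMod d) = 0 := by
          rw [ZMod.natCast_eq_zero_iff]
          constructor
          · intro h; rw [← h]; exact Nat.gcd_dvd_right d n
          · intro h; exact Nat.gcd_eq_left h
        rw [this]
      rw [hcard, card_icc_filter_cast d
          (fun x : ZMod d => (x ≠ (N : ZMod d) ∧ x ≠ -(N : ZMod d)) ∧ x = 0)]
      have hset : (Finset.univ.filter
          (fun x : ZMod d => ((x ≠ (N : ZMod d) ∧ x ≠ -(N : ZMod d)) ∧ x = 0)))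
          = {0} := by
        ext x
        simp only [Finset.mem_filter, Finset.mem_univ, true_and, Finset.mem_singleton]
        constructor
        · exact fun h => h.2
        · rintro rfl
          exact ⟨⟨fun h => hN0 h.symm, fun h => hN0 (neg_eq_zero.1 h.symm)⟩, rfl⟩
      rw [hset]
      have h6dn : d ∣ 6 * d * N := Dvd.dvd.mul_right (Dvd.dvd.mul_left dvd_rfl 6) N
      rw [hgcdNp, Nat.primeFactors_one, hp.primeFactors, Finset.filter_singleton]
      simp [h6dn]

lemma coprime_step (N a b : ℕ) (ha : 0 < a) (hb : 0 < b) (hab : Nat.Coprime a b)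
    (d : ℕ) (hd : d ∣ (a * b) / Nat.gcd (a * b) (6 * N)) :
    ((Finset.Icc 1 (a * b)).filter
        (fun n : ℕ => Int.gcd (((N : ℤ) - n) * ((N : ℤ) + n)) ((a * b : ℕ) : ℤ) = 1
          ∧ Nat.gcd ((a * b) / Nat.gcd (a * b) (6 * N)) n = d)).card
      = ((Finset.Icc 1 a).filter
          (fun n : ℕ => Int.gcd (((N : ℤ) - n) * ((N : ℤ) + n)) (a : ℤ) = 1
            ∧ Nat.gcd (a / Nat.gcd a (6 * N)) n = Nat.gcd d a)).card
        * ((Finset.Icc 1 b).filter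
          (fun n : ℕ => Int.gcd (((N : ℤ) - n) * ((N : ℤ) + n)) (b : ℤ) = 1
            ∧ Nat.gcd (b / Nat.gcd b (6 * N)) n = Nat.gcd d b)).card := by
  classical
  have hgab : Nat.gcd (a * b) (6 * N) = Nat.gcd a (6 * N) * Nat.gcd b (6 * N) := by
    rw [Nat.gcd_comm (a * b), Nat.gcd_comm a, Nat.gcd_comm b]
    exact Nat.Coprime.gcd_mul _ hab
  have hM' : (a * b) / Nat.gcd (a * b) (6 * N)
      = (a / Nat.gcd a (6 * N)) * (b / Nat.gcd b (6 * N)) := by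
    rw [hgab, Nat.div_mul_div_comm (Nat.gcd_dvd_left a _) (Nat.gcd_dvd_left b _)]
  set A' := a / Nat.gcd a (6 * N) with hA'
  set B' := b / Nat.gcd b (6 * N) with hB'
  have hA'a : A' ∣ a := Nat.div_dvd_of_dvd (Nat.gcd_dvd_left _ _)
  have hB'b : B' ∣ b := Nat.div_dvd_of_dvd (Nat.gcd_dvd_left _ _)
  have hA'B' : Nat.Coprime A' B' :=
    Nat.Coprime.coprime_dvd_left hA'a (Nat.Coprime.coprime_dvd_right hB'b hab)
  rw [hM'] at hd ⊢
  have hdab : d ∣ a * b := hd.trans (mul_dvd_mul hA'a hB'b)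
  have hdAB : d = Nat.gcd d a * Nat.gcd d b := by
    have h := Nat.Coprime.gcd_mul d hab
    rwa [Nat.gcd_eq_left hdab] at h
  have hkey : ∀ n : ℕ, (Nat.gcd (A' * B') n = d
      ↔ (Nat.gcd A' n = Nat.gcd d a ∧ Nat.gcd B' n = Nat.gcd d b)) := by
    intro n
    have hsplit : Nat.gcd (A' * B') n = Nat.gcd A' n * Nat.gcd B' n := by
      rw [Nat.gcd_comm (A' * B'), Nat.Coprime.gcd_mul n hA'B',
        Nat.gcd_comm n A', Nat.gcd_comm n B']
    constructor
    · intro h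
      have hu : Nat.gcd A' n ∣ a := (Nat.gcd_dvd_left A' n).trans hA'a
      have hv : Nat.gcd B' n ∣ b := (Nat.gcd_dvd_left B' n).trans hB'b
      have h1 : Nat.gcd d a = Nat.gcd A' n := by
        rw [← h, hsplit,
          Nat.Coprime.gcd_mul_right_cancel (Nat.gcd A' n)
            (Nat.Coprime.coprime_dvd_left hv hab.symm)]
        exact Nat.gcd_eq_left hu
      have h2 : Nat.gcd d b = Nat.gcd B' n := by
        rw [← h, hsplit,
          Nat.Coprime.gcd_mul_left_cancel (Nat.gcd B' n)
            (Nat.Coprime.coprime_dvd_left hu hab)]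
        exact Nat.gcd_eq_left hv
      exact ⟨h1.symm, h2.symm⟩
    · rintro ⟨h1, h2⟩
      rw [hsplit, h1, h2, ← hdAB]
  rw [← Finset.card_product]
  refine Finset.card_bij (fun n _ => (toIcc a n, toIcc b n)) ?_ ?_ ?_
  · -- maps into the product
    intro n hn
    simp only [Finset.mem_filter, Finset.mem_product] at hn ⊢
    obtain ⟨hmem, hc1, hc2⟩ := hn
    obtain ⟨h1a, h1b⟩ := cond1_split.1 hc1
    obtain ⟨h2a, h2b⟩ := (hkey n).1 hc2
    refine ⟨⟨toIcc_mem ha n, ?_, ?_⟩, ⟨toIcc_mem hb n, ?_, ?_⟩⟩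
    · rw [cond1_congr (toIcc_modeq a n)]; exact h1a
    · rw [gcd_nat_congr (Nat.ModEq.of_dvd hA'a (toIcc_modeq a n))]; exact h2a
    · rw [cond1_congr (toIcc_modeq b n)]; exact h1b
    · rw [gcd_nat_congr (Nat.ModEq.of_dvd hB'b (toIcc_modeq b n))]; exact h2b
  · -- injective
    intro n hn n' hn' heq
    simp only [Finset.mem_filter] at hn hn'
    simp only [Prod.mk.injEq] at heq
    have ea : n ≡ n' [MOD a] :=
      ((toIcc_modeq a n).symm.trans (heq.1 ▸ toIcc_modeq a n'))
    have eb : n ≡ n' [MOD b] :=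
      ((toIcc_modeq b n).symm.trans (heq.2 ▸ toIcc_modeq b n'))
    exact icc_modeq_eq hn.1 hn'.1 ((Nat.modEq_and_modEq_iff_modEq_mul hab).1 ⟨ea, eb⟩)
  · -- surjective
    rintro ⟨u, v⟩ huv
    simp only [Finset.mem_product, Finset.mem_filter] at huv
    obtain ⟨⟨hu, hu1, hu2⟩, ⟨hv, hv1, hv2⟩⟩ := huv
    set c := (Nat.chineseRemainder hab u v : ℕ) with hc
    set n := toIcc (a * b) c with hn
    have hna : n ≡ u [MOD a] :=
      ((Nat.ModEq.of_dvd (dvd_mul_right a b) (toIcc_modeq (a * b) c)).trans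
        (Nat.chineseRemainder hab u v).2.1)
    have hnb : n ≡ v [MOD b] :=
      ((Nat.ModEq.of_dvd (dvd_mul_left b a) (toIcc_modeq (a * b) c)).trans
        (Nat.chineseRemainder hab u v).2.2)
    refine ⟨n, Finset.mem_filter.2 ⟨toIcc_mem (mul_pos ha hb) c, ?_, ?_⟩, ?_⟩
    · refine cond1_split.2 ⟨?_, ?_⟩
      · rw [cond1_congr hna]; exact hu1
      · rw [cond1_congr hnb]; exact hv1
    · refine (hkey n).2 ⟨?_, ?_⟩
      · rw [gcd_nat_congr (Nat.ModEq.of_dvd hA'a hna)]; exact hu2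
      · rw [gcd_nat_congr (Nat.ModEq.of_dvd hB'b hnb)]; exact hv2
    · have h1 : toIcc a n = u :=
        icc_modeq_eq (toIcc_mem ha n) hu ((toIcc_modeq a n).trans hna)
      have h2 : toIcc b n = v :=
        icc_modeq_eq (toIcc_mem hb n) hv ((toIcc_modeq b n).trans hnb)
      rw [h1, h2]

lemma rhs_mul (N a b d : ℕ) (ha : 0 < a) (hb : 0 < b) (hab : Nat.Coprime a b) :
    (∏ p ∈ (Nat.gcd N (a * b)).primeFactors, (p - 1)) *
        ∏ p ∈ (a * b).primeFactors.filter (fun p => ¬ p ∣ 6 * d * N), (p - 3)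
      = ((∏ p ∈ (Nat.gcd N a).primeFactors, (p - 1)) *
          ∏ p ∈ a.primeFactors.filter (fun p => ¬ p ∣ 6 * Nat.gcd d a * N), (p - 3))
        * ((∏ p ∈ (Nat.gcd N b).primeFactors, (p - 1)) *
          ∏ p ∈ b.primeFactors.filter (fun p => ¬ p ∣ 6 * Nat.gcd d b * N), (p - 3)) := by
  classical
  have h1 : Nat.gcd N (a * b) = Nat.gcd N a * Nat.gcd N b := Nat.Coprime.gcd_mul N hab
  have hcop : Nat.Coprime (Nat.gcd N a) (Nat.gcd N b) :=
    Nat.Coprime.coprime_dvd_left (Nat.gcd_dvd_right N a)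
      (Nat.Coprime.coprime_dvd_right (Nat.gcd_dvd_right N b) hab)
  have hfa : a.primeFactors.filter (fun p => ¬ p ∣ 6 * d * N)
      = a.primeFactors.filter (fun p => ¬ p ∣ 6 * Nat.gcd d a * N) := by
    apply Finset.filter_congr
    intro p hp
    simp only [Nat.mem_primeFactors] at hp
    obtain ⟨hpp, hpa, -⟩ := hp
    have hiff : p ∣ 6 * d * N ↔ p ∣ 6 * Nat.gcd d a * N := by
      constructor
      · intro h
        rcases hpp.dvd_mul.1 h with h' | h'
        · rcases hpp.dvd_mul.1 h' with h6 | hd'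
          · exact Dvd.dvd.mul_right (Dvd.dvd.mul_right h6 _) N
          · exact Dvd.dvd.mul_right (Dvd.dvd.mul_left (Nat.dvd_gcd hd' hpa) 6) N
        · exact Dvd.dvd.mul_left h' _
      · intro h
        exact h.trans (mul_dvd_mul (mul_dvd_mul_left 6 (Nat.gcd_dvd_left d a)) dvd_rfl)
    exact not_congr hiff
  have hfb : b.primeFactors.filter (fun p => ¬ p ∣ 6 * d * N)
      = b.primeFactors.filter (fun p => ¬ p ∣ 6 * Nat.gcd d b * N) := by
    apply Finset.filter_congr
    intro p hp
    simp only [Nat.mem_primeFactors] at hp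
    obtain ⟨hpp, hpb, -⟩ := hp
    have hiff : p ∣ 6 * d * N ↔ p ∣ 6 * Nat.gcd d b * N := by
      constructor
      · intro h
        rcases hpp.dvd_mul.1 h with h' | h'
        · rcases hpp.dvd_mul.1 h' with h6 | hd'
          · exact Dvd.dvd.mul_right (Dvd.dvd.mul_right h6 _) N
          · exact Dvd.dvd.mul_right (Dvd.dvd.mul_left (Nat.dvd_gcd hd' hpb) 6) N
        · exact Dvd.dvd.mul_left h' _
      · intro h
        exact h.trans (mul_dvd_mul (mul_dvd_mul_left 6 (Nat.gcd_dvd_left d b)) dvd_rfl)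
    exact not_congr hiff
  rw [h1, Nat.Coprime.primeFactors_mul hcop,
    Finset.prod_union (Nat.Coprime.disjoint_primeFactors hcop),
    Nat.primeFactors_mul ha.ne' hb.ne', Finset.filter_union,
    Finset.prod_union (Finset.disjoint_filter_filter (Nat.Coprime.disjoint_primeFactors hab)),
    hfa, hfb]
  ring

lemma master (N : ℕ) (hN : 1 ≤ N) : ∀ P : ℕ, Squarefree P → ∀ d : ℕ,
    d ∣ P / Nat.gcd P (6 * N) →
    ((Finset.Icc 1 P).filter
        (fun n : ℕ => Int.gcd (((N : ℤ) - (n : ℤ)) * ((N : ℤ) + (n : ℤ))) (P : ℤ) = 1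
          ∧ Nat.gcd (P / Nat.gcd P (6 * N)) n = d)).card
      = (∏ p ∈ (Nat.gcd N P).primeFactors, (p - 1)) *
        ∏ p ∈ P.primeFactors.filter (fun p => ¬ p ∣ 6 * d * N), (p - 3) := by
  intro P
  induction P using Nat.recOnPosPrimePosCoprime with
  | prime_pow p k hpp hk =>
    intro hsq d hd
    have hk1 : k = 1 := by
      by_contra hne
      have h2 : 2 ≤ k := by omega
      have hdvd : p * p ∣ p ^ k := by
        have : p ^ 2 ∣ p ^ k := pow_dvd_pow p h2
        simpa [sq] using this
      exact hpp.not_isUnit (hsq p hdvd)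
    subst hk1
    rw [pow_one] at hsq hd ⊢
    exact prime_case N p hN (hpp) d hd
  | zero => intro h; exact absurd h not_squarefree_zero
  | one =>
    intro _ d hd
    have hd1 : d = 1 := by simpa using hd
    subst hd1
    simp [Finset.Icc_self, Finset.filter_singleton]
  | coprime a b ha hb hab iha ihb =>
    intro hsq d hd
    have ha0 : 0 < a := lt_trans one_pos ha
    have hb0 : 0 < b := lt_trans one_pos hb
    have hsa : Squarefree a := hsq.squarefree_of_dvd (dvd_mul_right a b)
    have hsb : Squarefree b := hsq.squarefree_of_dvd (dvd_mul_left b a)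
    have hgab : Nat.gcd (a * b) (6 * N) = Nat.gcd a (6 * N) * Nat.gcd b (6 * N) := by
      rw [Nat.gcd_comm (a * b), Nat.gcd_comm a, Nat.gcd_comm b]
      exact Nat.Coprime.gcd_mul _ hab
    have hM' : (a * b) / Nat.gcd (a * b) (6 * N)
        = (a / Nat.gcd a (6 * N)) * (b / Nat.gcd b (6 * N)) := by
      rw [hgab, Nat.div_mul_div_comm (Nat.gcd_dvd_left a _) (Nat.gcd_dvd_left b _)]
    have hA'a : a / Nat.gcd a (6 * N) ∣ a := Nat.div_dvd_of_dvd (Nat.gcd_dvd_left _ _)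
    have hB'b : b / Nat.gcd b (6 * N) ∣ b := Nat.div_dvd_of_dvd (Nat.gcd_dvd_left _ _)
    have hdm : d ∣ (a / Nat.gcd a (6 * N)) * (b / Nat.gcd b (6 * N)) := hM' ▸ hd
    have hdA' : Nat.gcd d a ∣ a / Nat.gcd a (6 * N) := by
      refine Nat.Coprime.dvd_of_dvd_mul_right
        (Nat.Coprime.coprime_dvd_left (Nat.gcd_dvd_right d a)
          (Nat.Coprime.coprime_dvd_right hB'b hab))
        ((Nat.gcd_dvd_left d a).trans hdm)
    have hdB' : Nat.gcd d b ∣ b / Nat.gcd b (6 * N) := by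
      refine Nat.Coprime.dvd_of_dvd_mul_left
        (Nat.Coprime.coprime_dvd_left (Nat.gcd_dvd_right d b)
          (Nat.Coprime.coprime_dvd_right hA'a hab.symm))
        ((Nat.gcd_dvd_left d b).trans hdm)
    rw [coprime_step N a b ha0 hb0 hab d hd,
      iha hsa (Nat.gcd d a) hdA', ihb hsb (Nat.gcd d b) hdB']
    exact (rhs_mul N a b d ha0 hb0 hab).symm

theorem stmt_6 (N P : ℕ) (hN : 1 ≤ N) (hP : 1 ≤ P) (hsq : Squarefree P)
    (d : ℕ) (hd : d ∣ P / Nat.gcd P (6 * N)) :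
    ((Finset.Icc 1 P).filter
        (fun n : ℕ => Int.gcd (((N : ℤ) - (n : ℤ)) * ((N : ℤ) + (n : ℤ))) (P : ℤ) = 1
          ∧ Nat.gcd (P / Nat.gcd P (6 * N)) n = d)).card
      = (∏ p ∈ (Nat.gcd N P).primeFactors, (p - 1)) *
        ∏ p ∈ P.primeFactors.filter (fun p => ¬ p ∣ 6 * d * N), (p - 3) := by
  exact master N hN P hsq d hd
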